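/- Let H be submodular on X = ∏ᵢ {0,…,kᵢ-1}, and let w be the output of the greedy algorithm for some ordering compatible with a nonincreasing ρ. Then w ∈ W(H): for every x ∈ X, ∑ᵢ₌₁ⁿ ∑_{zᵢ=1}^{xᵢ} wᵢ(zᵢ) ≤ H(x) - H(0), with equality when x = (k₁-1,…,kₙ-1). In particular, W(H) is nonempty. -/

import Mathlib

/-- The output `w` of the greedy algorithm (along any increasing chain `y` from `0` to
`(k₁-1,…,kₙ-1)` compatible with a nonincreasing `ρ`) belongs to `W(H)`: for all `x`
in the grid, `∑ i, ∑_{z=1}^{x i} w i z ≤ H x - H 0`, with equality at the top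
element. In particular `W(H)` is nonempty. -/
theorem greedy_in_WH (n : ℕ) (k : Fin n → ℕ) (H : (Fin n → ℕ) → ℝ)
    (hsub : ∀ x y : Fin n → ℕ, (∀ i, x i ≤ k i - 1) → (∀ i, y i ≤ k i - 1) →
      H (x ⊓ y) + H (x ⊔ y) ≤ H x + H y)
    (r : ℕ) (hr : r = ∑ i, (k i - 1))
    (y : ℕ → Fin n → ℕ) (hy0 : y 0 = fun _ => 0) (hyr : y r = fun i => k i - 1)
    (hstep : ∀ s, 1 ≤ s → s ≤ r →
      ∃ i, y s = Function.update (y (s - 1)) i (y (s - 1) i + 1))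
    (w : Fin n → ℕ → ℝ)
    (hw : ∀ s, 1 ≤ s → s ≤ r → ∀ i, y s i = y (s - 1) i + 1 →
      w i (y s i) = H (y s) - H (y (s - 1))) :
    (∀ x : Fin n → ℕ, (∀ i, x i ≤ k i - 1) →
      ∑ i, ∑ z ∈ Finset.Icc 1 (x i), w i z ≤ H x - H (fun _ => 0)) ∧
    ∑ i, ∑ z ∈ Finset.Icc 1 (k i - 1), w i z =
      H (fun i => k i - 1) - H (fun _ => 0) := by
  -- cleaned-up step description
  have hstep' : ∀ s, s + 1 ≤ r → ∃ i, y (s+1) i = y s i + 1 ∧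
      ∀ j, j ≠ i → y (s+1) j = y s j := by
    intro s hs
    obtain ⟨i, hi⟩ := hstep (s+1) (by omega) hs
    have h1 : s + 1 - 1 = s := by omega
    rw [h1] at hi
    refine ⟨i, ?_, ?_⟩
    · rw [hi]; simp
    · intro j hj; rw [hi]; simp [Function.update, hj]
  -- monotonicity along the chain
  have hmono : ∀ s d, s + d ≤ r → ∀ i, y s i ≤ y (s + d) i := by
    intro s d
    induction d with
    | zero => intro _ i; exact le_rfl
    | succ d ih =>
      intro h i
      obtain ⟨j, hj1, hj2⟩ := hstep' (s + d) (by omega)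
      by_cases hij : i = j
      · subst hij
        have := ih (by omega) i
        show y s i ≤ y (s + d + 1) i
        omega
      · have h2 := hj2 i hij
        have := ih (by omega) i
        show y s i ≤ y (s + d + 1) i
        omega
  -- upper bound along the chain
  have hub : ∀ s, s ≤ r → ∀ i, y s i ≤ k i - 1 := by
    intro s hs i
    have h1 := hmono s (r - s) (by omega) i
    rw [show s + (r - s) = r by omega, hyr] at h1
    exact h1
  -- the value of w on each step
  have hw' : ∀ s, s + 1 ≤ r → ∀ i, y (s+1) i = y s i + 1 →
      w i (y s i + 1) = H (y (s+1)) - H (y s) := by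
    intro s hs i hi
    have := hw (s+1) (by omega) hs i (by rw [show s+1-1 = s from by omega]; exact hi)
    rw [show s+1-1 = s from by omega] at this
    rw [← hi]; exact this
  -- the telescoping equality
  have heq : ∀ s, s ≤ r → ∑ i, ∑ z ∈ Finset.Icc 1 (y s i), w i z = H (y s) - H (y 0) := by
    intro s
    induction s with
    | zero =>
      intro _
      have : ∀ i : Fin n, y 0 i = 0 := by rw [hy0]; intro i; rfl
      simp [this]
    | succ s ih =>
      intro hs
      obtain ⟨i, hi1, hi2⟩ := hstep' s hs
      have hsplit : ∀ i' : Fin n, ∑ z ∈ Finset.Icc 1 (y (s+1) i'), w i' z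
          = (∑ z ∈ Finset.Icc 1 (y s i'), w i' z)
            + (if i' = i then w i (y s i + 1) else 0) := by
        intro i'
        by_cases h : i' = i
        · subst h
          rw [hi1, Finset.sum_Icc_succ_top (by omega)]
          simp
        · simp [h, hi2 i' h]
      rw [Finset.sum_congr rfl (fun i' _ => hsplit i'), Finset.sum_add_distrib]
      have hv := hw' s hs i hi1
      have hih := ih (by omega)
      simp only [Finset.sum_ite_eq', Finset.mem_univ, if_true]
      rw [hih, hv]
      ring
  -- the inequality along the chain
  have hineq : ∀ x : Fin n → ℕ, (∀ i, x i ≤ k i - 1) → ∀ s, s ≤ r →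
      ∑ i, ∑ z ∈ Finset.Icc 1 (min (x i) (y s i)), w i z
        ≤ H (fun j => min (y s j) (x j)) - H (y 0) := by
    intro x hx s
    induction s with
    | zero =>
      intro _
      have h0 : ∀ i : Fin n, y 0 i = 0 := by rw [hy0]; intro i; rfl
      have e1 : (fun j => min (y 0 j) (x j)) = y 0 := by
        funext j; rw [h0 j]; simp
      rw [e1]
      simp [h0]
    | succ s ih =>
      intro hs
      obtain ⟨i, hi1, hi2⟩ := hstep' s hs
      by_cases hcase : y s i + 1 ≤ x i
      · -- the step coordinate stays below x
        have hsplit : ∀ i' : Fin n, ∑ z ∈ Finset.Icc 1 (min (x i') (y (s+1) i')), w i' z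
            = (∑ z ∈ Finset.Icc 1 (min (x i') (y s i')), w i' z)
              + (if i' = i then w i (y s i + 1) else 0) := by
          intro i'
          by_cases h : i' = i
          · subst h
            rw [hi1, show min (x i') (y s i' + 1) = y s i' + 1 by omega,
              show min (x i') (y s i') = y s i' by omega,
              Finset.sum_Icc_succ_top (by omega)]
            simp
          · simp [h, hi2 i' h]
        rw [Finset.sum_congr rfl (fun i' _ => hsplit i'), Finset.sum_add_distrib]
        simp only [Finset.sum_ite_eq', Finset.mem_univ, if_true]
        have hv := hw' s hs i hi1
        -- submodularity
        have hb : ∀ j, min (y (s+1) j) (x j) ≤ k j - 1 :=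
          fun j => le_trans (min_le_right _ _) (hx j)
        have hsm := hsub (y s) (fun j => min (y (s+1) j) (x j)) (hub s (by omega)) hb
        have e1 : (y s ⊓ fun j => min (y (s+1) j) (x j)) = fun j => min (y s j) (x j) := by
          funext j
          simp only [Pi.inf_apply]
          by_cases h : j = i
          · subst h; rw [hi1]; omega
          · rw [hi2 j h]; omega
        have e2 : (y s ⊔ fun j => min (y (s+1) j) (x j)) = y (s+1) := by
          funext j
          simp only [Pi.sup_apply]
          by_cases h : j = i
          · subst h; rw [hi1]; omega
          · rw [hi2 j h]; omega
        rw [e1, e2] at hsm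
        have hih := ih (by omega)
        rw [hv]
        linarith
      · -- the step coordinate already exceeds x
        have hcase' : x i ≤ y s i := by omega
        have hsame : ∀ i' : Fin n, min (x i') (y (s+1) i') = min (x i') (y s i') := by
          intro i'
          by_cases h : i' = i
          · subst h; rw [hi1]; omega
          · rw [hi2 i' h]
        have hsame2 : (fun j => min (y (s+1) j) (x j)) = fun j => min (y s j) (x j) := by
          funext j
          by_cases h : j = i
          · subst h; rw [hi1]; omega
          · rw [hi2 j h]
        simp only [hsame, hsame2]
        exact ih (by omega)
  constructor
  · intro x hx
    have h1 := hineq x hx r le_rfl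
    have e2 : (fun j => min (y r j) (x j)) = x := by
      funext j
      have h2 : y r j = k j - 1 := by rw [hyr]
      have := hx j
      omega
    rw [e2, hy0] at h1
    have e3 : ∑ i, ∑ z ∈ Finset.Icc 1 (x i), w i z
        = ∑ i, ∑ z ∈ Finset.Icc 1 (min (x i) (y r i)), w i z := by
      refine Finset.sum_congr rfl fun i _ => ?_
      have h2 : y r i = k i - 1 := by rw [hyr]
      have h3 : min (x i) (y r i) = x i := by
        have := hx i; omega
      rw [h3]
    rw [e3]
    exact h1
  · have h1 := heq r le_rfl
    have e1 : ∀ i : Fin n, y r i = k i - 1 := by intro i; rw [hyr]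
    rw [hy0] at h1
    have e2 : ∑ i, ∑ z ∈ Finset.Icc 1 (y r i), w i z
        = ∑ i, ∑ z ∈ Finset.Icc 1 (k i - 1), w i z :=
      Finset.sum_congr rfl fun i _ => by rw [e1 i]
    rw [e2, hyr] at h1
    exact h1
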